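/- Let T be a subsemigroup of finite Rees index in a finitely generated transcendental entire semigroup S. Then I(S) = I(T), J(S) = J(T), and F(S) = F(T). -/

import Mathlib

open Filter Topology

/-- A family `S` of maps is normal on `V` if every sequence from `S` has a subsequence
converging locally uniformly on `V` or diverging uniformly to `∞` on compact subsets of `V`. -/
def NormalOn (S : Set (ℂ → ℂ)) (V : Set ℂ) : Prop :=
  ∀ seq : ℕ → ℂ → ℂ, (∀ n, seq n ∈ S) →
    ∃ φ : ℕ → ℕ, StrictMono φ ∧
      ((∃ g : ℂ → ℂ, TendstoLocallyUniformlyOn (fun n => seq (φ n)) g atTop V) ∨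
       (∀ K : Set ℂ, K ⊆ V → IsCompact K → ∀ M : ℝ,
          ∀ᶠ n in atTop, ∀ z ∈ K, M ≤ ‖seq (φ n) z‖))

/-- Fatou set of a semigroup of holomorphic maps: points of local normality. -/
def FatouSet (S : Set (ℂ → ℂ)) : Set ℂ :=
  {z | ∃ V ∈ 𝓝 z, NormalOn S V}

/-- Julia set: complement of the Fatou set. -/
def JuliaSet (S : Set (ℂ → ℂ)) : Set ℂ := (FatouSet S)ᶜ

/-- Escaping set of a semigroup: points where every element is iteratively divergent. -/
def EscapingSet (S : Set (ℂ → ℂ)) : Set ℂ :=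
  {z | ∀ f ∈ S, Tendsto (fun n => ‖f^[n] z‖) atTop atTop}

/-- Escaping set of a single function. -/
def EscapingSetOf (f : ℂ → ℂ) : Set ℂ :=
  {z | Tendsto (fun n => ‖f^[n] z‖) atTop atTop}

/-- A holomorphic semigroup: a nonempty set of entire maps closed under composition. -/
def HolomorphicSemigroup (S : Set (ℂ → ℂ)) : Prop :=
  S.Nonempty ∧ (∀ f ∈ S, Differentiable ℂ f) ∧ ∀ f ∈ S, ∀ g ∈ S, f ∘ g ∈ S

/-- A transcendental entire function: entire and not a polynomial. -/
def TranscendentalEntire (f : ℂ → ℂ) : Prop :=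
  Differentiable ℂ f ∧ ¬ ∃ p : Polynomial ℂ, ∀ z, f z = p.eval z

/-- A transcendental (entire) semigroup. -/
def TranscendentalSemigroup (S : Set (ℂ → ℂ)) : Prop :=
  S.Nonempty ∧ (∀ f ∈ S, TranscendentalEntire f) ∧ ∀ f ∈ S, ∀ g ∈ S, f ∘ g ∈ S

/-- `T` is a subsemigroup of `S`. -/
def IsSubsemigroupOf (T S : Set (ℂ → ℂ)) : Prop :=
  T.Nonempty ∧ T ⊆ S ∧ ∀ f ∈ T, ∀ g ∈ T, f ∘ g ∈ T

/-- `T` has finite index in `S`: `S` is a finite union of translates `fᵢ ∘ T` with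
`fᵢ ∈ S ∪ {id}`. -/
def FiniteIndexIn (T S : Set (ℂ → ℂ)) : Prop :=
  ∃ (n : ℕ) (fs : Fin n → ℂ → ℂ), (∀ i, fs i ∈ S ∨ fs i = id) ∧
    S = ⋃ i, (fun h => fs i ∘ h) '' T

/-- `T` has cofinite index in `S`. -/
def CofiniteIndexIn (T S : Set (ℂ → ℂ)) : Prop :=
  ∃ (n : ℕ) (fs : Fin n → ℂ → ℂ), (∀ i, fs i ∈ S ∨ fs i = id) ∧
    ∀ f ∈ S, ∃ i, fs i ∘ f ∈ T

/-- Membership in the semigroup generated by a set `A` of maps: all finite compositions. -/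
inductive SemigroupGen (A : Set (ℂ → ℂ)) : (ℂ → ℂ) → Prop
  | base : ∀ f ∈ A, SemigroupGen A f
  | comp : ∀ f g, SemigroupGen A f → SemigroupGen A g → SemigroupGen A (f ∘ g)

/-- A finitely generated semigroup of maps. -/
def FinitelyGeneratedSemigroup (S : Set (ℂ → ℂ)) : Prop :=
  ∃ A : Set (ℂ → ℂ), A.Finite ∧ S = {f | SemigroupGen A f}

/-- `U` is a component of the Fatou set of `S`. -/
def IsFatouComponent (S : Set (ℂ → ℂ)) (U : Set ℂ) : Prop :=
  ∃ z ∈ FatouSet S, U = connectedComponentIn (FatouSet S) z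

/-- `S` is discontinuous at `z`: some neighborhood `V` of `z` satisfies `f(V) ∩ V = ∅`
for all `f ∈ S`. -/
def DiscontinuousAt (S : Set (ℂ → ℂ)) (z : ℂ) : Prop :=
  ∃ V ∈ 𝓝 z, ∀ f ∈ S, f '' V ∩ V = ∅

/-- The regular set of `S`. -/
def RegularSet (S : Set (ℂ → ℂ)) : Set ℂ := {z | DiscontinuousAt S z}

/-- The limit set of `S`. -/
def LimitSet (S : Set (ℂ → ℂ)) : Set ℂ :=
  {z | ∃ (z₀ : ℂ) (fs : ℕ → ℂ → ℂ), (∀ n, fs n ∈ S) ∧ Function.Injective fs ∧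
    Tendsto (fun n => fs n z₀) atTop (𝓝 z)}

/-- A partial fundamental set for `S`. -/
def PartialFundamentalSet (S : Set (ℂ → ℂ)) (U : Set ℂ) : Prop :=
  U.Nonempty ∧ U ⊆ RegularSet S ∧ ∀ f ∈ S, f '' U ∩ U = ∅

/-- A fundamental set for `S`. -/
def FundamentalSet (S : Set (ℂ → ℂ)) (U : Set ℂ) : Prop :=
  PartialFundamentalSet S U ∧ (⋃ f ∈ S, f '' U) = RegularSet S


/-! ### Auxiliary lemmas -/

section Aux

open Set Function

/-- A constant sequence tends locally uniformly to its value. -/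
lemma tlu_const' (f : ℂ → ℂ) (V : Set ℂ) :
    TendstoLocallyUniformlyOn (fun _ : ℕ => f) f atTop V := by
  intro u hu x hx
  exact ⟨V, self_mem_nhdsWithin,
    Filter.Eventually.of_forall fun n y _ => refl_mem_uniformity hu⟩

lemma normalOn_mono {S T : Set (ℂ → ℂ)} {V : Set ℂ} (hTS : T ⊆ S)
    (h : NormalOn S V) : NormalOn T V :=
  fun seq hseq => h seq fun n => hTS (hseq n)

lemma normalOn_of_cofinite {S T : Set (ℂ → ℂ)} {V : Set ℂ} (hTS : T ⊆ S)
    (hfin : (S \ T).Finite) (h : NormalOn T V) : NormalOn S V := by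
  intro seq hseq
  by_cases hcase : {n | seq n ∈ S \ T}.Infinite
  · -- some element of the finite set `S \ T` occurs infinitely often
    have hpig : ∃ f ∈ S \ T, {n | seq n = f}.Infinite := by
      by_contra hc
      push_neg at hc
      have hsub : {n | seq n ∈ S \ T} ⊆ ⋃ f ∈ S \ T, {n | seq n = f} := by
        intro n hn
        exact Set.mem_biUnion hn rfl
      have hfin2 : (⋃ f ∈ S \ T, {n | seq n = f}).Finite :=
        hfin.biUnion fun f hf => hc f hf
      exact (hcase.mono hsub) hfin2
    obtain ⟨f, _, hinf⟩ := hpig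
    refine ⟨Nat.nth (fun n => seq n = f), Nat.nth_strictMono hinf, Or.inl ⟨f, ?_⟩⟩
    have he : (fun n => seq (Nat.nth (fun n => seq n = f) n)) = fun _ => f :=
      funext fun n => Nat.nth_mem_of_infinite hinf n
    rw [he]
    exact tlu_const' f V
  · -- eventually the sequence lies in `T`
    rw [Set.not_infinite] at hcase
    obtain ⟨N, hN⟩ : ∃ N, ∀ n, N ≤ n → seq n ∈ T := by
      obtain ⟨m, hm⟩ := hcase.bddAbove
      refine ⟨m + 1, fun n hn => ?_⟩
      by_contra h'
      have : n ∈ {n | seq n ∈ S \ T} := ⟨hseq n, h'⟩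
      have := hm this
      omega
    obtain ⟨ψ, hψ, hdisj⟩ := h (fun n => seq (n + N)) fun n => hN _ (Nat.le_add_left N n)
    exact ⟨fun n => ψ n + N, fun a b hab => Nat.add_lt_add_right (hψ hab) N, hdisj⟩

/-- If the iterates of `f^[k]` escape at `z`, then the iterates of `f` escape at `z`. -/
lemma escape_of_iterate {f : ℂ → ℂ} (hf : Continuous f) {k : ℕ} (hk : 0 < k) (z : ℂ)
    (hesc : Filter.Tendsto (fun m => ‖(f^[k])^[m] z‖) atTop atTop) :
    Filter.Tendsto (fun n => ‖f^[n] z‖) atTop atTop := by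
  rw [Filter.tendsto_atTop_atTop]
  by_contra hcon
  push_neg at hcon
  obtain ⟨b, hb⟩ := hcon
  have hbd : ∀ j : ℕ, ∃ C, ∀ w : ℂ, ‖w‖ ≤ b → ‖f^[j] w‖ ≤ C := by
    intro j
    obtain ⟨C, hC⟩ := (isCompact_closedBall (0 : ℂ) b).exists_bound_of_continuousOn
      (hf.iterate j).continuousOn
    exact ⟨C, fun w hw => hC w (mem_closedBall_zero_iff.mpr hw)⟩
  choose C hC using hbd
  set D : ℝ := ∑ j ∈ Finset.range (k + 1), |C j| with hD
  have hCD : ∀ j, j ≤ k → C j ≤ D := by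
    intro j hj
    refine le_trans (le_abs_self _) ?_
    exact Finset.single_le_sum (fun i _ => abs_nonneg (C i))
      (Finset.mem_range.mpr (Nat.lt_succ_of_le hj))
  obtain ⟨N, hN⟩ := Filter.tendsto_atTop_atTop.mp hesc (D + 1)
  obtain ⟨n, hn, hnb⟩ := hb (k * N)
  set q := n / k with hq
  set r := n % k with hrdef
  have hr : r < k := Nat.mod_lt _ hk
  have hqr : n = k * q + r := (Nat.div_add_mod n k).symm
  have h3 : k * (q + 1) = (k - r) + n := by
    obtain ⟨a, ha⟩ : ∃ a, k * q = a := ⟨_, rfl⟩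
    rw [Nat.mul_succ, hqr, ha]
    omega
  have key : (f^[k])^[q + 1] z = f^[k - r] (f^[n] z) := by
    rw [← Function.iterate_mul, ← Function.iterate_add_apply, h3]
  have h1 : ‖(f^[k])^[q + 1] z‖ ≤ D := by
    rw [key]
    exact le_trans (hC (k - r) _ hnb.le) (hCD _ (Nat.sub_le k r))
  have h2 : D + 1 ≤ ‖(f^[k])^[q + 1] z‖ := by
    refine hN (q + 1) ?_
    have : N ≤ q := (Nat.le_div_iff_mul_le hk).mpr (by rw [Nat.mul_comm]; exact hn)
    omega
  linarith

/-- Nonconstancy of a map. -/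
def Nonconst (f : ℂ → ℂ) : Prop := ∃ a b : ℂ, f a ≠ f b

lemma isOpen_range_of_nonconst {f : ℂ → ℂ} (hf : Differentiable ℂ f)
    (h : Nonconst f) : IsOpen (Set.range f) := by
  have hA : AnalyticOnNhd ℂ f Set.univ := fun z _ => hf.analyticAt z
  rcases hA.is_constant_or_isOpen isPreconnected_univ with ⟨w, hw⟩ | hopen
  · obtain ⟨a, b, hab⟩ := h
    exact absurd ((hw a trivial).trans (hw b trivial).symm) hab
  · simpa [Set.image_univ] using hopen Set.univ subset_rfl isOpen_univ

lemma eq_of_eqOn_open {f g : ℂ → ℂ} (hf : Differentiable ℂ f) (hg : Differentiable ℂ g)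
    {V : Set ℂ} (hV : IsOpen V) {z₀ : ℂ} (hz : z₀ ∈ V) (h : Set.EqOn f g V) : f = g := by
  have hfA : AnalyticOnNhd ℂ f Set.univ := fun z _ => hf.analyticAt z
  have hgA : AnalyticOnNhd ℂ g Set.univ := fun z _ => hg.analyticAt z
  exact hfA.eq_of_eventuallyEq hgA (Filter.eventually_of_mem (hV.mem_nhds hz) h)

lemma comp_nonconst {f g : ℂ → ℂ} (hf : Differentiable ℂ f) (hg : Differentiable ℂ g)
    (hfn : Nonconst f) (hgn : Nonconst g) : Nonconst (f ∘ g) := by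
  by_contra h
  unfold Nonconst at h
  push_neg at h
  have hconst : Set.EqOn f (fun _ => f (g 0)) (Set.range g) := by
    rintro _ ⟨x, rfl⟩
    exact h x 0
  have hfeq : f = fun _ => f (g 0) :=
    eq_of_eqOn_open hf (differentiable_const _) (isOpen_range_of_nonconst hg hgn)
      ⟨0, rfl⟩ hconst
  obtain ⟨a, b, hab⟩ := hfn
  exact hab (by rw [hfeq])

lemma iterate_nonconst {f : ℂ → ℂ} (hf : Differentiable ℂ f) (hfn : Nonconst f) :
    ∀ m : ℕ, Nonconst (f^[m + 1]) := by
  intro m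
  induction m with
  | zero => simpa using hfn
  | succ m ih =>
    rw [Function.iterate_succ']
    exact comp_nonconst hf (hf.iterate (m + 1)) hfn ih

lemma transcendental_nonconst {f : ℂ → ℂ} (hf : TranscendentalEntire f) : Nonconst f := by
  by_contra h
  unfold Nonconst at h
  push_neg at h
  exact hf.2 ⟨Polynomial.C (f 0), fun z => by rw [h z 0, Polynomial.eval_C]⟩

/-- For every `f` in a transcendental semigroup `S` with `(S \ T)` finite, some iterate of `f`
lies in `T`. -/
lemma exists_iterate_mem {S T : Set (ℂ → ℂ)} (hS : TranscendentalSemigroup S)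
    (hRees : (S \ T).Finite) {f : ℂ → ℂ} (hfS : f ∈ S) : ∃ k : ℕ, 0 < k ∧ f^[k] ∈ T := by
  have hiter : ∀ k : ℕ, f^[k + 1] ∈ S := by
    intro k
    induction k with
    | zero => simpa using hfS
    | succ k ih =>
      rw [Function.iterate_succ']
      exact hS.2.2 f hfS _ ih
  by_contra hcon
  push_neg at hcon
  have hmem : ∀ k : ℕ, f^[k + 1] ∈ S \ T := fun k => ⟨hiter k, hcon (k + 1) (Nat.succ_pos k)⟩
  obtain ⟨a, -, b, -, hab, heq⟩ :=
    Set.infinite_univ.exists_ne_map_eq_of_mapsTo (f := fun k : ℕ => f^[k + 1])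
      (fun k _ => hmem k) hRees
  obtain ⟨a, b, hlt, heq⟩ : ∃ a b : ℕ, a < b ∧ f^[a + 1] = f^[b + 1] := by
    rcases lt_or_gt_of_ne hab with h | h
    · exact ⟨a, b, h, heq⟩
    · exact ⟨b, a, h, heq.symm⟩
  set d := b - a with hd
  have hd1 : 0 < d := by omega
  have hcomp : f^[d] ∘ f^[a + 1] = f^[a + 1] := by
    rw [← Function.iterate_add]
    have hsum : d + (a + 1) = b + 1 := by omega
    rw [hsum, ← heq]
  have hdf : Differentiable ℂ f := (hS.2.1 f hfS).1
  have hnc : Nonconst (f^[a + 1]) :=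
    iterate_nonconst hdf (transcendental_nonconst (hS.2.1 f hfS)) a
  have hid : f^[d] = id := by
    refine eq_of_eqOn_open (hdf.iterate d) differentiable_id
      (isOpen_range_of_nonconst (hdf.iterate (a + 1)) hnc)
      (show f^[a + 1] 0 ∈ Set.range (f^[a + 1]) from ⟨0, rfl⟩) ?_
    rintro _ ⟨x, rfl⟩
    exact congrFun hcomp x
  have hdS : f^[d] ∈ S := by
    have := hiter (d - 1)
    rwa [Nat.sub_add_cancel hd1] at this
  exact (hS.2.1 _ hdS).2 ⟨Polynomial.X, fun z => by rw [hid, Polynomial.eval_X]; rfl⟩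

end Aux

theorem stmt_15 (S T : Set (ℂ → ℂ)) (hS : TranscendentalSemigroup S)
    (hfg : FinitelyGeneratedSemigroup S) (hT : IsSubsemigroupOf T S)
    (hRees : (S \ T).Finite) :
    EscapingSet S = EscapingSet T ∧ JuliaSet S = JuliaSet T ∧
      FatouSet S = FatouSet T := by
  have hTS : T ⊆ S := hT.2.1
  have hF : FatouSet S = FatouSet T := by
    ext z
    constructor
    · rintro ⟨V, hV, hn⟩
      exact ⟨V, hV, normalOn_mono hTS hn⟩
    · rintro ⟨V, hV, hn⟩
      exact ⟨V, hV, normalOn_of_cofinite hTS hRees hn⟩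
  refine ⟨?_, ?_, hF⟩
  · ext z
    constructor
    · intro hz f hf
      exact hz f (hTS hf)
    · intro hz f hf
      obtain ⟨k, hk, hkT⟩ := exists_iterate_mem hS hRees hf
      have hcont : Continuous f := (hS.2.1 f hf).1.continuous
      exact escape_of_iterate hcont hk z (hz _ hkT)
  · rw [JuliaSet, JuliaSet, hF]
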